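/- If two impartial games with activeness G^g and H^h are equivalent, then they have the same activeness (g=h), the same type, and the same ordinary Grundy value 𝒢(G^g)=𝒢(H^h), and the same outcome o(G^g)=o(H^h). -/
import Mathlib


inductive AGame : Type where
  | mk : List AGame → Bool → AGame

namespace AGame

noncomputable instance : DecidableEq AGame := Classical.decEq _

def opts : AGame → List AGame | mk gs _ => gs
def act : AGame → Bool | mk _ g => g

theorem sizeOf_lt_of_mem {G G' : AGame} (h : G' ∈ G.opts) : sizeOf G' < sizeOf G := by
  cases G with
  | mk gs g =>
    simp only [opts] at h
    have := List.sizeOf_lt_of_mem h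
    simp [AGame.mk.sizeOf_spec]
    omega

/-- Disjunctive sum of games with activeness. -/
def add (G H : AGame) : AGame :=
  mk (G.opts.attach.map (fun x => add x.1 H) ++
      H.opts.attach.map (fun y => add G y.1)) (G.act || H.act)
termination_by sizeOf G + sizeOf H
decreasing_by
  · have := sizeOf_lt_of_mem x.2; omega
  · have := sizeOf_lt_of_mem y.2; omega

/-- `PPos G` means the outcome of `G` is 𝒫 (second player wins). -/
def PPos (G : AGame) : Prop :=
  G.act = false ∨ ∀ G' ∈ G.opts.attach, ¬ PPos G'.1
termination_by sizeOf G
decreasing_by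
  have := sizeOf_lt_of_mem G'.2; omega

/-- Hereditary set-equality (the paper's ≅). -/
def Identical (G H : AGame) : Prop :=
  G.act = H.act ∧ (∀ G' ∈ G.opts.attach, ∃ H' ∈ H.opts.attach, Identical G'.1 H'.1)
              ∧ (∀ H' ∈ H.opts.attach, ∃ G' ∈ G.opts.attach, Identical G'.1 H'.1)
termination_by sizeOf G + sizeOf H
decreasing_by
  · have := sizeOf_lt_of_mem G'.2; have := sizeOf_lt_of_mem H'.2; omega
  · have := sizeOf_lt_of_mem G'.2; have := sizeOf_lt_of_mem H'.2; omega

/-- Equivalence of games with activeness: same outcome in every sum. -/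
def Equiv (G H : AGame) : Prop := ∀ X : AGame, (PPos (add G X) ↔ PPos (add H X))

end AGame

namespace AGame

/-- Nimbers with activeness: `star γ n ≅ {star γ j : j < n}^{γ n}`. -/
def star (γ : ℕ → Bool) : ℕ → AGame
  | n => mk ((List.range n).attach.map (fun j => star γ j.1)) (γ n)
termination_by n => n
decreasing_by
  have := j.2; simp [List.mem_range] at this; omega

/-- The generalized Grundy set `𝒢^γ(G)`. -/
def GSet (γ : ℕ → Bool) (G : AGame) : Set ℕ := {n | PPos (add G (star γ n))}

/-- Minimum excludant of a set of naturals. -/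
noncomputable def mex (S : Set ℕ) : ℕ := sInf {n | n ∉ S}

/-- Ordinary Grundy value, computed ignoring activeness. -/
noncomputable def grundy (G : AGame) : ℕ :=
  mex {m | ∃ G' ∈ G.opts.attach, grundy G'.1 = m}
termination_by sizeOf G
decreasing_by
  have := sizeOf_lt_of_mem G'.2; omega

/-- The three types of games with activeness. -/
inductive AType : Type where
  | inactive : AType            -- type 0
  | activeSomeInactive : AType  -- type 1_{∃0}
  | activeAllActive : AType     -- type 1_{∀1}

open Classical in
/-- `type(G^g)`. -/
noncomputable def typ (G : AGame) : AType :=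
  if G.act = false then .inactive
  else if ∃ G' ∈ G.opts, G'.act = false then .activeSomeInactive
  else .activeAllActive

/-- Formal birthday `b(G)`. -/
def bday (G : AGame) : ℕ :=
  (G.opts.attach.map (fun G' => bday G'.1 + 1)).foldr max 0
termination_by sizeOf G
decreasing_by
  have := sizeOf_lt_of_mem G'.2; omega

/-- An option `G'` of `G` is reversible if it has an option equivalent to `G`. -/
def Reversible (G G' : AGame) : Prop := ∃ G'' ∈ G'.opts, Equiv G'' G

/-- A canonical game: all options canonical and no option reversible. -/
def Canonical (G : AGame) : Prop :=
  (∀ G' ∈ G.opts.attach, Canonical G'.1) ∧ (∀ G' ∈ G.opts, ¬ Reversible G G')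
termination_by sizeOf G
decreasing_by
  have := sizeOf_lt_of_mem G'.2; omega

/-- A transitive game: all options transitive and options of options are options. -/
def TransGame (G : AGame) : Prop :=
  (∀ G' ∈ G.opts.attach, TransGame G'.1) ∧ (∀ G' ∈ G.opts, ∀ G'' ∈ G'.opts, G'' ∈ G.opts)
termination_by sizeOf G
decreasing_by
  have := sizeOf_lt_of_mem G'.2; omega

/-- `G` is covered by `H` if every option of `G` is equivalent to some option of `H`. -/
def Covered (G H : AGame) : Prop := ∀ G' ∈ G.opts, ∃ H' ∈ H.opts, Equiv G' H'

/-- The relation `G ⋈ H`. -/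
def Bowtie (G H : AGame) : Prop :=
  (∀ G' ∈ G.opts, ¬ Equiv G' H) ∧ (∀ H' ∈ H.opts, ¬ Equiv G H')

/-- The linear chain `∅^{g₀ g₁ … gₙ}`. -/
def chain (g : ℕ → Bool) : ℕ → AGame
  | 0 => mk [] (g 0)
  | n + 1 => mk [chain g n] (g (n + 1))

end AGame

namespace AGame

lemma add_eq (G H : AGame) : add G H =
    mk (G.opts.attach.map (fun x => add x.1 H) ++
        H.opts.attach.map (fun y => add G y.1)) (G.act || H.act) := by
  rw [add]

lemma act_add (G H : AGame) : (add G H).act = (G.act || H.act) := by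
  rw [add_eq]; rfl

lemma mem_opts_add {G H K : AGame} : K ∈ (add G H).opts ↔
    (∃ G' ∈ G.opts, K = add G' H) ∨ (∃ H' ∈ H.opts, K = add G H') := by
  rw [add_eq]
  simp only [opts, List.mem_append, List.mem_map, List.mem_attach, true_and, Subtype.exists]
  constructor
  · rintro (⟨a, ha, rfl⟩ | ⟨a, ha, rfl⟩)
    · exact Or.inl ⟨a, ha, rfl⟩
    · exact Or.inr ⟨a, ha, rfl⟩
  · rintro (⟨a, ha, rfl⟩ | ⟨a, ha, rfl⟩)
    · exact Or.inl ⟨a, ha, rfl⟩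
    · exact Or.inr ⟨a, ha, rfl⟩

lemma PPos_iff (G : AGame) : PPos G ↔ (G.act = false ∨ ∀ G' ∈ G.opts, ¬ PPos G') := by
  rw [PPos]
  constructor
  · rintro (h | h)
    · exact Or.inl h
    · exact Or.inr fun G' hG' => h ⟨G', hG'⟩ (List.mem_attach _ _)
  · rintro (h | h)
    · exact Or.inl h
    · exact Or.inr fun G' _ => h G'.1 G'.2

lemma PPos_of_act_false {G : AGame} (h : G.act = false) : PPos G :=
  (PPos_iff G).2 (Or.inl h)

lemma PPos_iff_of_act_true {G : AGame} (h : G.act = true) : PPos G ↔ ∀ G' ∈ G.opts, ¬ PPos G' := by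
  rw [PPos_iff]; simp [h]

lemma PPos_add_iff {G H : AGame} (h : (G.act || H.act) = true) :
    PPos (add G H) ↔ (∀ G' ∈ G.opts, ¬ PPos (add G' H)) ∧ (∀ H' ∈ H.opts, ¬ PPos (add G H')) := by
  rw [PPos_iff_of_act_true (by rw [act_add]; exact h)]
  constructor
  · intro hp
    exact ⟨fun G' hG' => hp _ (mem_opts_add.2 (Or.inl ⟨G', hG', rfl⟩)),
           fun H' hH' => hp _ (mem_opts_add.2 (Or.inr ⟨H', hH', rfl⟩))⟩
  · rintro ⟨h1, h2⟩ K hK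
    rcases mem_opts_add.1 hK with ⟨G', hG', rfl⟩ | ⟨H', hH', rfl⟩
    · exact h1 G' hG'
    · exact h2 H' hH'

lemma star_eq (γ : ℕ → Bool) (n : ℕ) : star γ n =
    mk ((List.range n).attach.map (fun j => star γ j.1)) (γ n) := by
  rw [star]

lemma act_star (γ : ℕ → Bool) (n : ℕ) : (star γ n).act = γ n := by rw [star_eq]; rfl

lemma mem_opts_star {γ : ℕ → Bool} {n : ℕ} {K : AGame} :
    K ∈ (star γ n).opts ↔ ∃ j < n, K = star γ j := by
  rw [star_eq]
  simp only [opts, List.mem_map, List.mem_attach, true_and, Subtype.exists, List.mem_range]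
  constructor
  · rintro ⟨j, hj, rfl⟩; exact ⟨j, hj, rfl⟩
  · rintro ⟨j, hj, rfl⟩; exact ⟨j, hj, rfl⟩

/-- the zero game -/
def zero : AGame := mk [] false

lemma ppos_add_zero (G : AGame) : PPos (add G zero) ↔ PPos G := by
  rw [PPos_iff (add G zero), PPos_iff G, act_add]
  have hopts : ∀ K ∈ (add G zero).opts, ∃ G' ∈ G.opts, K = add G' zero := by
    intro K hK
    rcases mem_opts_add.1 hK with ⟨G', hG', rfl⟩ | ⟨H', hH', _⟩
    · exact ⟨G', hG', rfl⟩
    · simp [zero, opts] at hH'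
  constructor
  · rintro (ha | hp)
    · exact Or.inl (by simp only [Bool.or_eq_false_iff] at ha; exact ha.1)
    · refine Or.inr fun G' hG' hpp => hp (add G' zero) (mem_opts_add.2 (Or.inl ⟨G', hG', rfl⟩)) ?_
      exact (ppos_add_zero G').2 hpp
  · rintro (ha | hp)
    · exact Or.inl (by simp only [Bool.or_eq_false_iff]; exact ⟨ha, rfl⟩)
    · refine Or.inr fun K hK => ?_
      obtain ⟨G', hG', rfl⟩ := hopts K hK
      exact fun hpp => hp G' hG' ((ppos_add_zero G').1 hpp)
termination_by sizeOf G
decreasing_by all_goals (have := sizeOf_lt_of_mem hG'; omega)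

lemma equiv_symm {G H : AGame} (h : Equiv G H) : Equiv H G := fun X => (h X).symm

lemma not_equiv_of_act {G H : AGame} (hG : G.act = true) (hH : H.act = false) :
    ¬ Equiv G H := by
  intro h
  have h0 : PPos (add G zero) := by
    refine (h zero).2 (PPos_of_act_false ?_)
    rw [act_add, hH]; rfl
  have h1 : PPos (add G (mk [zero] false)) := by
    refine (h _).2 (PPos_of_act_false ?_)
    rw [act_add, hH]; rfl
  have := (PPos_add_iff (by rw [hG]; rfl)).1 h1
  exact this.2 zero (by simp [opts]) h0

lemma act_eq_of_equiv {G H : AGame} (h : Equiv G H) : G.act = H.act := by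
  cases hG : G.act <;> cases hH : H.act
  · rfl
  · exact absurd (equiv_symm h) (not_equiv_of_act hH hG)
  · exact absurd h (not_equiv_of_act hG hH)
  · rfl

/-- Set of Grundy values of options. -/
def gset (G : AGame) : Set ℕ := {m | ∃ G' ∈ G.opts, grundy G' = m}

lemma grundy_eq (G : AGame) : grundy G = sInf {n | n ∉ gset G} := by
  rw [grundy, mex]
  congr 1
  ext n
  simp only [Set.mem_setOf_eq, gset]
  constructor
  · intro hn hc
    obtain ⟨G', hG', hg⟩ := hc
    exact hn ⟨⟨G', hG'⟩, List.mem_attach _ _, hg⟩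
  · intro hn hc
    obtain ⟨G', _, hg⟩ := hc
    exact hn ⟨G'.1, G'.2, hg⟩

lemma gset_finite (G : AGame) : (gset G).Finite := by
  refine Set.Finite.subset (List.finite_toSet (G.opts.map grundy)) ?_
  rintro m ⟨G', hG', rfl⟩
  exact List.mem_map.2 ⟨G', hG', rfl⟩

lemma compl_gset_nonempty (G : AGame) : {n | n ∉ gset G}.Nonempty := by
  have := (Set.Finite.infinite_compl (gset_finite G)).nonempty
  exact this

lemma grundy_notMem (G : AGame) : grundy G ∉ gset G := by
  rw [grundy_eq]
  exact Nat.sInf_mem (compl_gset_nonempty G)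

lemma grundy_le {G : AGame} {n : ℕ} (hn : n ∉ gset G) : grundy G ≤ n := by
  rw [grundy_eq]; exact Nat.sInf_le hn

lemma grundy_add_nimT (G : AGame) (n : ℕ) :
    PPos (add G (star (fun _ => true) n)) ↔ grundy G = n := by
  rw [PPos_add_iff (by rw [act_star]; simp)]
  constructor
  · rintro ⟨h1, h2⟩
    have hn : n ∉ gset G := by
      rintro ⟨G', hG', hg⟩
      exact h1 G' hG' ((grundy_add_nimT G' n).2 hg)
    have hle : n ≤ grundy G := by
      by_contra hlt
      push_neg at hlt
      exact h2 (star (fun _ => true) (grundy G)) (mem_opts_star.2 ⟨_, hlt, rfl⟩)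
        ((grundy_add_nimT G (grundy G)).2 rfl)
    exact le_antisymm (grundy_le hn) hle
  · rintro rfl
    refine ⟨fun G' hG' hp => ?_, fun X' hX' hp => ?_⟩
    · exact grundy_notMem G ⟨G', hG', (grundy_add_nimT G' _).1 hp⟩
    · obtain ⟨j, hj, rfl⟩ := mem_opts_star.1 hX'
      have := (grundy_add_nimT G j).1 hp
      omega
termination_by sizeOf G + n
decreasing_by
  · have := sizeOf_lt_of_mem hG'; omega
  · omega
  · have := sizeOf_lt_of_mem hG'; omega
  · omega

lemma grundy_eq_of_equiv {G H : AGame} (h : Equiv G H) : grundy G = grundy H := by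
  have h1 : PPos (add G (star (fun _ => true) (grundy G))) := (grundy_add_nimT G _).2 rfl
  have h2 := (h _).1 h1
  exact ((grundy_add_nimT H _).1 h2).symm

lemma ppos_nimF_unique {K : AGame} (hK : K.act = true) {m m' : ℕ}
    (h1 : PPos (add K (star (fun _ => false) m)))
    (h2 : PPos (add K (star (fun _ => false) m'))) : m = m' := by
  rcases Nat.lt_trichotomy m m' with h | h | h
  · exact absurd h1 (((PPos_add_iff (by simp [hK])).1 h2).2 _ (mem_opts_star.2 ⟨m, h, rfl⟩))
  · exact h
  · exact absurd h2 (((PPos_add_iff (by simp [hK])).1 h1).2 _ (mem_opts_star.2 ⟨m', h, rfl⟩))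

lemma exists_ppos_nimF {H : AGame} (hH : H.act = true)
    (hall : ∀ H' ∈ H.opts, H'.act = true) :
    ∃ n, PPos (add H (star (fun _ => false) n)) := by
  set B := {m | ∃ H' ∈ H.opts, PPos (add H' (star (fun _ => false) m))} with hB
  have hBfin : B.Finite := by
    refine Set.Finite.subset
      (List.finite_toSet (H.opts.map (fun H' => sInf {m | PPos (add H' (star (fun _ => false) m))}))) ?_
    rintro m ⟨H', hH', hm⟩
    refine List.mem_map.2 ⟨H', hH', ?_⟩
    have hne : {m | PPos (add H' (star (fun _ => false) m))}.Nonempty := ⟨m, hm⟩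
    exact ppos_nimF_unique (hall H' hH') (Nat.sInf_mem hne) hm
  have hc : Bᶜ.Nonempty := (Set.Finite.infinite_compl hBfin).nonempty
  refine ⟨sInf Bᶜ, (PPos_add_iff (by simp [hH])).2 ⟨?_, ?_⟩⟩
  · intro H' hH' hp
    exact (Nat.sInf_mem hc : sInf Bᶜ ∈ Bᶜ) ⟨H', hH', hp⟩
  · rintro X' hX' hp
    obtain ⟨j, hj, rfl⟩ := mem_opts_star.1 hX'
    have hjB : j ∈ B := by
      by_contra hnot
      exact Nat.notMem_of_lt_sInf hj hnot
    obtain ⟨H', hH', hpj⟩ := hjB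
    exact ((PPos_add_iff (by simp [hH])).1 hp).1 H' hH' hpj

lemma not_ppos_nimF {G : AGame} (hG : G.act = true) {G₀ : AGame}
    (hmem : G₀ ∈ G.opts) (h0 : G₀.act = false) (n : ℕ) :
    ¬ PPos (add G (star (fun _ => false) n)) := fun hp =>
  ((PPos_add_iff (by simp [hG])).1 hp).1 G₀ hmem
    (PPos_of_act_false (by rw [act_add, h0, act_star]; rfl))

lemma exists_inactive_opt_of_equiv {G H : AGame} (h : Equiv G H)
    (hG : G.act = true) (hH : H.act = true)
    (hex : ∃ G' ∈ G.opts, G'.act = false) : ∃ H' ∈ H.opts, H'.act = false := by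
  by_contra hno
  have hall : ∀ H' ∈ H.opts, H'.act = true := fun H' hm => by
    by_contra hne
    exact hno ⟨H', hm, by simpa using hne⟩
  obtain ⟨n, hn⟩ := exists_ppos_nimF hH hall
  obtain ⟨G₀, hmem, h0⟩ := hex
  exact not_ppos_nimF hG hmem h0 n ((h _).2 hn)

lemma typ_eq_of_equiv {G H : AGame} (h : Equiv G H) : typ G = typ H := by
  have hact := act_eq_of_equiv h
  cases hG : G.act with
  | false =>
    have hH : H.act = false := hact ▸ hG
    rw [typ, typ, if_pos hG, if_pos hH]
  | true =>
    have hH : H.act = true := hact ▸ hG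
    have hiff : (∃ G' ∈ G.opts, G'.act = false) ↔ (∃ H' ∈ H.opts, H'.act = false) :=
      ⟨exists_inactive_opt_of_equiv h hG hH,
       exists_inactive_opt_of_equiv (equiv_symm h) hH hG⟩
    have hG' : ¬ (G.act = false) := by simp [hG]
    have hH' : ¬ (H.act = false) := by simp [hH]
    by_cases hex : ∃ G' ∈ G.opts, G'.act = false
    · rw [typ, if_neg hG', if_pos hex, typ, if_neg hH', if_pos (hiff.1 hex)]
    · rw [typ, if_neg hG', if_neg hex, typ, if_neg hH', if_neg (fun hc => hex (hiff.2 hc))]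

end AGame

/-- Equivalent games have the same activeness, type, ordinary Grundy value, and outcome. -/
theorem AGame.invariants_of_equiv (G H : AGame) (h : AGame.Equiv G H) :
    G.act = H.act ∧ AGame.typ G = AGame.typ H ∧ AGame.grundy G = AGame.grundy H ∧
    (AGame.PPos G ↔ AGame.PPos H) := by
  refine ⟨act_eq_of_equiv h, typ_eq_of_equiv h, grundy_eq_of_equiv h, ?_⟩
  exact (ppos_add_zero G).symm.trans ((h zero).trans (ppos_add_zero H))
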